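/- Let U ∈ ℝ^{p×r} and V ∈ ℝ^{n×r} each have orthonormal columns, with incoherence bounds ‖Uᵀ e_a‖_2^2 ≤ μr/p and ‖Vᵀ e_b‖_2^2 ≤ μr/n for all a, b. Then for any standard basis matrix e_a e_bᵀ, the projection P_T(e_a e_bᵀ) = U Uᵀ e_a e_bᵀ + e_a e_bᵀ V Vᵀ − U Uᵀ e_a e_bᵀ V Vᵀ satisfies ‖P_T(e_a e_bᵀ)‖_F^2 ≤ μr(n+p)/(pn). -/

import Mathlib

open Matrix

lemma sum_sq_proj_col {p r : ℕ} (U : Matrix (Fin p) (Fin r) ℝ) (hU : Uᵀ * U = 1)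
    (a : Fin p) : ∑ i, (∑ k, U i k * U a k)^2 = ∑ k, (U a k)^2 := by
  have h : ∀ k l, ∑ i, U i k * U i l = if k = l then (1:ℝ) else 0 := by
    intro k l
    have := congrFun (congrFun hU k) l
    simpa [Matrix.mul_apply, Matrix.one_apply] using this
  calc ∑ i, (∑ k, U i k * U a k)^2
      = ∑ i, ∑ k, ∑ l, (U i k * U a k) * (U i l * U a l) := by
        simp [sq, Finset.sum_mul_sum]
    _ = ∑ k, ∑ l, (U a k * U a l) * ∑ i, U i k * U i l := by
        rw [Finset.sum_comm]
        refine Finset.sum_congr rfl fun k _ => ?_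
        rw [Finset.sum_comm]
        refine Finset.sum_congr rfl fun l _ => ?_
        rw [Finset.mul_sum]
        exact Finset.sum_congr rfl fun i _ => by ring
    _ = ∑ k, (U a k)^2 := by
        simp [h, mul_ite, Finset.sum_ite_eq', sq]

/-- Frobenius norm squared of the projection `P_T(e_a e_bᵀ)` is at most `μ r (n+p)/(p n)`. -/
theorem frobenius_sq_projT_stdBasis_le {p n r : ℕ} (μ : ℝ) (hμ : 0 < μ)
    (U : Matrix (Fin p) (Fin r) ℝ) (V : Matrix (Fin n) (Fin r) ℝ)
    (hU : Uᵀ * U = 1) (hV : Vᵀ * V = 1)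
    (hUinc : ∀ a : Fin p, (∑ k, (U a k) ^ 2) ≤ μ * r / p)
    (hVinc : ∀ b : Fin n, (∑ k, (V b k) ^ 2) ≤ μ * r / n)
    (a : Fin p) (b : Fin n) :
    (∑ i, ∑ j,
        ((U * Uᵀ * Matrix.single a b (1 : ℝ) + Matrix.single a b (1 : ℝ) * (V * Vᵀ)
          - U * Uᵀ * Matrix.single a b (1 : ℝ) * (V * Vᵀ)) i j) ^ 2)
      ≤ μ * r * (n + p) / (p * n) := by
  set f : Fin p → ℝ := fun i => ∑ k, U i k * U a k with hf
  set g : Fin n → ℝ := fun j => ∑ k, V b k * V j k with hg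
  set ea : Fin p → ℝ := fun i => if i = a then 1 else 0 with hea
  set eb : Fin n → ℝ := fun j => if j = b then 1 else 0 with heb
  set A : ℝ := ∑ k, (U a k)^2 with hA
  set B : ℝ := ∑ k, (V b k)^2 with hB
  have hentry : ∀ i j,
      ((U * Uᵀ * Matrix.single a b (1 : ℝ) + Matrix.single a b (1 : ℝ) * (V * Vᵀ)
          - U * Uᵀ * Matrix.single a b (1 : ℝ) * (V * Vᵀ)) i j)
      = f i * eb j + ea i * g j - f i * g j := by
    intro i j
    simp only [hf, hg, hea, heb]
    simp [Matrix.mul_apply, Matrix.single, Matrix.of_apply, ite_and,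
      Finset.sum_ite_eq, Finset.sum_ite_eq', mul_ite, ite_mul, Finset.mul_sum, Finset.sum_mul,
      eq_comm]
  -- component sums
  have hfsq : ∑ i, (f i)^2 = A := sum_sq_proj_col U hU a
  have hgV : ∀ j, g j = ∑ k, V j k * V b k := fun j =>
    Finset.sum_congr rfl fun k _ => mul_comm _ _
  have hgsq : ∑ j, (g j)^2 = B := by
    rw [hB, ← sum_sq_proj_col V hV b]
    exact Finset.sum_congr rfl fun j _ => by rw [hgV j]
  have hebsq : ∑ j, (eb j)^2 = 1 := by simp [heb, sq, ite_mul, Finset.sum_ite_eq']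
  have heasq : ∑ i, (ea i)^2 = 1 := by simp [hea, sq, ite_mul, Finset.sum_ite_eq']
  have hfa : f a = A := by
    simp only [hf, hA]
    exact Finset.sum_congr rfl fun k _ => (sq (U a k)).symm
  have hgb : g b = B := by
    simp only [hg, hB]
    exact Finset.sum_congr rfl fun k _ => (sq (V b k)).symm
  have heaf : ∑ i, ea i * f i = A := by
    rw [← hfa]
    simp [hea, ite_mul, Finset.sum_ite_eq']
  have hebg : ∑ j, eb j * g j = B := by
    rw [← hgb]
    simp [heb, ite_mul, Finset.sum_ite_eq']
  have hfebg : ∑ j, (eb j) * g j - 0 = B := by rw [hebg]; ring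
  -- main identity
  have hsum : (∑ i, ∑ j, (f i * eb j + ea i * g j - f i * g j)^2) = A + B - A * B := by
    have expand : ∀ i j, (f i * eb j + ea i * g j - f i * g j)^2
        = (f i)^2 * (eb j)^2 + (ea i)^2 * (g j)^2 + (f i)^2 * (g j)^2
          + 2 * ((ea i * f i) * (eb j * g j)) - 2 * ((f i)^2 * (eb j * g j))
          - 2 * ((ea i * f i) * (g j)^2) := by
      intro i j; ring
    calc (∑ i, ∑ j, (f i * eb j + ea i * g j - f i * g j)^2)
        = (∑ i, (f i)^2) * (∑ j, (eb j)^2) + (∑ i, (ea i)^2) * (∑ j, (g j)^2)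
          + (∑ i, (f i)^2) * (∑ j, (g j)^2)
          + 2 * ((∑ i, ea i * f i) * (∑ j, eb j * g j))
          - 2 * ((∑ i, (f i)^2) * (∑ j, eb j * g j))
          - 2 * ((∑ i, ea i * f i) * (∑ j, (g j)^2)) := by
          simp only [expand, Finset.sum_add_distrib, Finset.sum_sub_distrib,
            ← Finset.sum_mul, ← Finset.mul_sum]
      _ = A + B - A * B := by
          rw [hfsq, hgsq, hebsq, heasq, heaf, hebg]; ring
  rw [show (∑ i, ∑ j,
        ((U * Uᵀ * Matrix.single a b (1 : ℝ) + Matrix.single a b (1 : ℝ) * (V * Vᵀ)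
          - U * Uᵀ * Matrix.single a b (1 : ℝ) * (V * Vᵀ)) i j) ^ 2)
      = ∑ i, ∑ j, (f i * eb j + ea i * g j - f i * g j)^2 from
    Finset.sum_congr rfl fun i _ => Finset.sum_congr rfl fun j _ => by rw [hentry i j], hsum]
  have hA0 : 0 ≤ A := Finset.sum_nonneg fun k _ => sq_nonneg _
  have hB0 : 0 ≤ B := Finset.sum_nonneg fun k _ => sq_nonneg _
  have hAle : A ≤ μ * r / p := hUinc a
  have hBle : B ≤ μ * r / n := hVinc b
  have hp : (0:ℝ) < p := by exact_mod_cast a.pos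
  have hn : (0:ℝ) < n := by exact_mod_cast b.pos
  have : A + B - A * B ≤ μ * r / p + μ * r / n := by nlinarith
  calc A + B - A * B ≤ μ * r / p + μ * r / n := this
    _ = μ * r * (n + p) / (p * n) := by field_simp
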